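/- arXiv:2111.12412 — 2 statements merged into one kernel-verified Lean document; each statement's English description precedes it below -/
import Mathlib

section
/- Let Γ be the supergraph of a graph G obtained from a (k,d)-shortcut system 𝒫 by adding an edge uv whenever 𝒫 contains a (u,v)-path. Then Γ is a ((k−1)/2)-shallow topological minor of G ∘ \overline{K_{d+1}}. -/
open SimpleGraph

variable {V W : Type}

/-- The strong product of two simple graphs. -/
def strongProd (G : SimpleGraph V) (H : SimpleGraph W) : SimpleGraph (V × W) where
  Adj a b := a ≠ b ∧ (a.1 = b.1 ∨ G.Adj a.1 b.1) ∧ (a.2 = b.2 ∨ H.Adj a.2 b.2)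
  symm := by
    constructor
    rintro a b ⟨hne, h1, h2⟩
    exact ⟨hne.symm, by tauto, by tauto⟩
  loopless := ⟨fun a h => h.1 rfl⟩

infixl:70 " ⊠ " => strongProd

/-- The lexicographic product of two simple graphs. -/
def lexProd (G : SimpleGraph V) (H : SimpleGraph W) : SimpleGraph (V × W) where
  Adj a b := G.Adj a.1 b.1 ∨ (a.1 = b.1 ∧ H.Adj a.2 b.2)
  symm := by
    constructor
    rintro a b (h | ⟨h, h'⟩)
    · exact Or.inl h.symm
    · exact Or.inr ⟨h.symm, h'.symm⟩
  loopless := by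
    constructor
    rintro a (h | ⟨_, h⟩)
    · exact G.irrefl h
    · exact H.irrefl h

/-- `G` is contained in `H`: `G` is isomorphic to a subgraph of `H`. -/
def Contains (G : SimpleGraph V) (H : SimpleGraph W) : Prop :=
  ∃ f : V → W, Function.Injective f ∧ ∀ ⦃u v⦄, G.Adj u v → H.Adj (f u) (f v)

/-- `(T, B)` is a tree-decomposition of `G`. -/
def IsTreeDecomp {ι : Type} (G : SimpleGraph V) (T : SimpleGraph ι) (B : ι → Set V) : Prop :=
  T.IsTree ∧
  (∀ ⦃u v⦄, G.Adj u v → ∃ i, u ∈ B i ∧ v ∈ B i) ∧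
  (∀ v : V, (T.induce {i | v ∈ B i}).Connected)

/-- The treewidth of `G` is at most `t`. -/
def TreewidthLE (G : SimpleGraph V) (t : ℕ) : Prop :=
  ∃ (ι : Type) (T : SimpleGraph ι) (B : ι → Set V),
    IsTreeDecomp G T B ∧ ∀ i, (B i).Finite ∧ (B i).ncard ≤ t + 1

/-- The row treewidth of `G` is at most `t`: `G` is contained in `H ⊠ P`
for some graph `H` of treewidth at most `t` and some path `P`. -/
def RowTreewidthLE (G : SimpleGraph V) (t : ℕ) : Prop :=
  ∃ (ι : Type) (H : SimpleGraph ι) (n : ℕ),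
    TreewidthLE H t ∧ Contains G (H ⊠ pathGraph n)

/-- `μ` is a model of an `r`-shallow minor `H` in `G`: branch sets are connected,
pairwise disjoint, of radius at most `r`, with adjacent branch sets for each edge of `H`. -/
def IsShallowMinorModel (H : SimpleGraph W) (G : SimpleGraph V) (r : ℕ) (μ : W → Set V) : Prop :=
  (∀ w, (G.induce (μ w)).Connected) ∧
  (∀ w, ∃ c : μ w, ∀ u : μ w, (G.induce (μ w)).dist c u ≤ r) ∧
  (Pairwise fun w w' => Disjoint (μ w) (μ w')) ∧
  (∀ ⦃w w'⦄, H.Adj w w' → ∃ u ∈ μ w, ∃ v ∈ μ w', G.Adj u v)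

/-- `H` is an `r`-shallow minor of `G`. -/
def ShallowMinor (H : SimpleGraph W) (G : SimpleGraph V) (r : ℕ) : Prop :=
  ∃ μ : W → Set V, IsShallowMinorModel H G r μ

/-- `H` is an `(m/2)`-shallow topological minor of `G`: a subgraph of `G` is an
`m`-subdivision of `H`, i.e. each edge of `H` is replaced by a path of length at most `m+1`,
and these paths are internally disjoint. -/
def ShallowTopMinor (H : SimpleGraph W) (G : SimpleGraph V) (m : ℕ) : Prop :=
  ∃ f : W → V, Function.Injective f ∧
  ∃ P : ∀ ⦃u v⦄, H.Adj u v → G.Walk (f u) (f v),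
    (∀ ⦃u v⦄ (h : H.Adj u v), (P h).IsPath ∧ (P h).length ≤ m + 1 ∧
      ∀ x ∈ (P h).support, x ∈ Set.range f → (x = f u ∨ x = f v)) ∧
    (∀ ⦃u v x y⦄ (h₁ : H.Adj u v) (h₂ : H.Adj x y), s(u,v) ≠ s(x,y) →
      ∀ z ∈ (P h₁).support, z ∈ (P h₂).support →
        (z = f u ∨ z = f v) ∧ (z = f x ∨ z = f y))

/-- The `s`-th power of a graph: vertices at distance at most `s` are adjacent. -/
def powG (G : SimpleGraph V) (s : ℕ) : SimpleGraph V where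
  Adj u v := u ≠ v ∧ ∃ p : G.Walk u v, p.length ≤ s
  symm := by
    constructor
    rintro u v ⟨h, p, hp⟩
    exact ⟨h.symm, p.reverse, by simpa using hp⟩
  loopless := ⟨fun v h => h.1 rfl⟩

/-- The maximum degree of `G` is at most `d`. -/
def MaxDegLE (G : SimpleGraph V) (d : ℕ) : Prop :=
  ∀ v, (G.neighborSet v).Finite ∧ (G.neighborSet v).ncard ≤ d
open SimpleGraph
variable {V W : Type}

/-- `R(G,⪯,v,s)`: vertices `w ⪯ v` reachable from `v` by a path of length at most `s`
whose internal vertices are all `≻ v`. -/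
def RSet (G : SimpleGraph V) (le : V → V → Prop) (v : V) (s : ℕ) : Set V :=
  {w | le w v ∧ ∃ p : G.Walk v w, p.length ≤ s ∧
    ∀ u ∈ p.support, u ≠ v → u ≠ w → (le v u ∧ u ≠ v)}

/-- `Q(G,⪯,v,s)`: vertices `w ⪯ v` reachable from `v` by a path of length at most `s`
whose internal vertices are all `≻ w`. -/
def QSet (G : SimpleGraph V) (le : V → V → Prop) (v : V) (s : ℕ) : Set V :=
  {w | le w v ∧ ∃ p : G.Walk v w, p.length ≤ s ∧
    ∀ u ∈ p.support, u ≠ v → u ≠ w → (le w u ∧ u ≠ w)}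

/-- The `s`-strong colouring number of `G` is at most `c`. -/
def ScolLE (G : SimpleGraph V) (s : ℕ) (c : ℕ) : Prop :=
  ∃ le : V → V → Prop, IsLinearOrder V le ∧
    ∀ v, (RSet G le v s).Finite ∧ (RSet G le v s).ncard ≤ c

/-- The `s`-weak colouring number of `G` is at most `c`. -/
def WcolLE (G : SimpleGraph V) (s : ℕ) (c : ℕ) : Prop :=
  ∃ le : V → V → Prop, IsLinearOrder V le ∧
    ∀ v, (QSet G le v s).Finite ∧ (QSet G le v s).ncard ≤ c

/-- The queue-number of `G` is at most `q`: there is a linear order of `V(G)` and an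
assignment of edges to `q` queues such that no two edges in the same queue nest. -/
def QueueLE (G : SimpleGraph V) (q : ℕ) : Prop :=
  ∃ le : V → V → Prop, IsLinearOrder V le ∧
    ∃ σ : V → V → ℕ,
      (∀ u v, σ u v = σ v u) ∧
      (∀ ⦃u v⦄, G.Adj u v → σ u v < q) ∧
      (∀ a b c d, G.Adj a b → G.Adj c d → σ a b = σ c d →
        (le a b ∧ a ≠ b) → (le c d ∧ c ≠ d) →
        ¬((le a c ∧ a ≠ c) ∧ (le d b ∧ d ≠ b)))

/-- A `(k,d)`-shortcut system for `G`: a set of paths of length at most `k` such that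
every vertex is an internal vertex of at most `d` of the paths. -/
structure ShortcutSystem (G : SimpleGraph V) (k d : ℕ) where
  paths : Set ((u : V) × (v : V) × G.Walk u v)
  isPath : ∀ p ∈ paths, p.2.2.IsPath
  lengthLE : ∀ p ∈ paths, p.2.2.length ≤ k
  internal : ∀ w : V,
    {p ∈ paths | w ∈ p.2.2.support ∧ w ≠ p.1 ∧ w ≠ p.2.1}.Finite ∧
    {p ∈ paths | w ∈ p.2.2.support ∧ w ≠ p.1 ∧ w ≠ p.2.1}.ncard ≤ d

/-- The supergraph `G^𝒫` of `G` obtained by adding an edge `uv` whenever `𝒫`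
contains a `(u,v)`-path. -/
def shortcutGraph (G : SimpleGraph V) {k d : ℕ} (P : ShortcutSystem G k d) : SimpleGraph V where
  Adj u v := u ≠ v ∧ (G.Adj u v ∨ ∃ p ∈ P.paths, (p.1 = u ∧ p.2.1 = v) ∨ (p.1 = v ∧ p.2.1 = u))
  symm := by
    constructor
    rintro u v ⟨h, h'⟩
    refine ⟨h.symm, ?_⟩
    rcases h' with h' | ⟨p, hp, h'⟩
    · exact Or.inl h'.symm
    · exact Or.inr ⟨p, hp, by tauto⟩
  loopless := ⟨fun v h => h.1 rfl⟩

/-- A `d`-clique lift of `G`: a choice `M v ⊆ N(v)` with `|M v| ≤ d` for each vertex `v`. -/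
structure CliqueLift (G : SimpleGraph V) (d : ℕ) where
  M : V → Set V
  subset_nbhd : ∀ v, M v ⊆ G.neighborSet v
  finite : ∀ v, (M v).Finite
  card_le : ∀ v, (M v).ncard ≤ d

/-- The graph `G^ℳ` obtained from `G` by adding the edge `uw` whenever there is a vertex `v`
with `u ∈ M v` and `w ∈ N(v)`. -/
def cliqueLiftGraph (G : SimpleGraph V) {d : ℕ} (ℳ : CliqueLift G d) : SimpleGraph V where
  Adj u w := u ≠ w ∧ (G.Adj u w ∨ ∃ v, (u ∈ ℳ.M v ∧ w ∈ G.neighborSet v) ∨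
    (w ∈ ℳ.M v ∧ u ∈ G.neighborSet v))
  symm := by
    constructor
    rintro u w ⟨h, h'⟩
    refine ⟨h.symm, ?_⟩
    rcases h' with h' | ⟨v, h'⟩
    · exact Or.inl h'.symm
    · exact Or.inr ⟨v, by tauto⟩
  loopless := ⟨fun v h => h.1 rfl⟩

/-- The `m × m` grid graph. -/
def gridGraph (m : ℕ) : SimpleGraph (Fin m × Fin m) where
  Adj a b := |(a.1 : ℤ) - b.1| + |(a.2 : ℤ) - b.2| = 1
  symm := by
    constructor
    intro a b h
    beta_reduce at h ⊢
    rw [abs_sub_comm ((b.1 : ℤ)), abs_sub_comm ((b.2 : ℤ))]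
    exact h
  loopless := by constructor; intro a h; simp at h

/-- `G^𝒫` is a `((k−1)/2)`-shallow topological minor of the lexicographic product
`G ∘ K̄_{d+1}`: a subgraph of `G ∘ K̄_{d+1}` is a `(k−1)`-subdivision of `G^𝒫`. -/
theorem shortcutGraph_shallowTopMinor {V : Type} (G : SimpleGraph V) (k d : ℕ)
    (P : ShortcutSystem G k d) :
    ShallowTopMinor (shortcutGraph G P) (lexProd G (⊥ : SimpleGraph (Fin (d + 1)))) (k - 1) := by
  classical
  have hgex : ∀ w : V, ∃ gg : {p ∈ P.paths | w ∈ p.2.2.support ∧ w ≠ p.1 ∧ w ≠ p.2.1} → Fin d,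
      Function.Injective gg := by
    intro w
    have hfin := (P.internal w).1
    have hcard := (P.internal w).2
    haveI := hfin.fintype
    have hc : Fintype.card {p ∈ P.paths | w ∈ p.2.2.support ∧ w ≠ p.1 ∧ w ≠ p.2.1}
        ≤ Fintype.card (Fin d) := by
      rw [Fintype.card_fin]
      calc Fintype.card {p ∈ P.paths | w ∈ p.2.2.support ∧ w ≠ p.1 ∧ w ≠ p.2.1}
          = ({p ∈ P.paths | w ∈ p.2.2.support ∧ w ≠ p.1 ∧ w ≠ p.2.1} : Set _).ncard := by
            rw [← Nat.card_coe_set_eq, Nat.card_eq_fintype_card]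
        _ ≤ d := hcard
    obtain ⟨e⟩ := Function.Embedding.nonempty_of_card_le hc
    exact ⟨e, e.injective⟩
  choose g hg using hgex
  refine ⟨fun v => (v, 0), fun a b hab => congrArg Prod.fst hab, ?_⟩
  have key : ∀ u v, (shortcutGraph G P).Adj u v →
      ∃ w : (lexProd G (⊥ : SimpleGraph (Fin (d + 1)))).Walk (u, 0) (v, 0),
        w.IsPath ∧ w.length ≤ k - 1 + 1 ∧
        ∀ z ∈ w.support, z = ((u, 0) : V × Fin (d + 1)) ∨ z = (v, 0) ∨
          ∃ p, p ∈ P.paths ∧ ((p.1 = u ∧ p.2.1 = v) ∨ (p.1 = v ∧ p.2.1 = u)) ∧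
            ∃ hm : p ∈ {q ∈ P.paths | z.1 ∈ q.2.2.support ∧ z.1 ≠ q.1 ∧ z.1 ≠ q.2.1},
              z.2 = (g z.1 ⟨p, hm⟩).succ := by
    intro u v h
    obtain ⟨hne, hcase⟩ : u ≠ v ∧ (G.Adj u v ∨ ∃ p ∈ P.paths, (p.1 = u ∧ p.2.1 = v) ∨ (p.1 = v ∧ p.2.1 = u)) := h
    by_cases hG : G.Adj u v
    · have hadj : (lexProd G (⊥ : SimpleGraph (Fin (d + 1)))).Adj (u, 0) (v, 0) := Or.inl hG
      refine ⟨Walk.cons hadj Walk.nil, ?_, by simp, ?_⟩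
      · simp [Walk.cons_isPath_iff]
        exact fun hc => hne hc
      · intro z hz
        simp [Walk.support_cons] at hz
        tauto
    · rcases hcase with hG' | ⟨p, hp, hend⟩
      · exact absurd hG' hG
      · set c : V → Fin (d + 1) := fun w =>
          if hm : p ∈ {q ∈ P.paths | w ∈ q.2.2.support ∧ w ≠ q.1 ∧ w ≠ q.2.1}
          then (g w ⟨p, hm⟩).succ else 0 with hcdef
        have hc1 : c p.1 = 0 := dif_neg (fun hm => hm.2.2.1 rfl)
        have hc2 : c p.2.1 = 0 := dif_neg (fun hm => hm.2.2.2 rfl)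
        let φ : G →g lexProd G (⊥ : SimpleGraph (Fin (d + 1))) :=
          ⟨fun w => (w, c w), fun hab => Or.inl hab⟩
        have hφinj : Function.Injective φ := fun a b hab => congrArg Prod.fst hab
        let w0 : (lexProd G (⊥ : SimpleGraph (Fin (d + 1)))).Walk (p.1, 0) (p.2.1, 0) :=
          (p.2.2.map φ).copy (by show (p.1, c p.1) = _; rw [hc1]) (by show (p.2.1, c p.2.1) = _; rw [hc2])
        have hpath0 : w0.IsPath := by
          simpa [w0] using Walk.map_isPath_of_injective hφinj (P.isPath p hp)
        have hne' : p.1 ≠ p.2.1 := by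
          rcases hend with ⟨e1, e2⟩ | ⟨e1, e2⟩ <;> subst e1 <;> subst e2
          · exact hne
          · exact hne.symm
        have hlen0 : w0.length ≤ k - 1 + 1 := by
          have hL := P.lengthLE p hp
          have h0 : p.2.2.length ≠ 0 := fun h0 => hne' (Walk.eq_of_length_eq_zero h0)
          have : w0.length = p.2.2.length := by simp [w0]
          omega
        have hsupp0 : ∀ z ∈ w0.support, z = ((p.1, 0) : V × Fin (d + 1)) ∨ z = (p.2.1, 0) ∨
            ∃ q, q ∈ P.paths ∧ ((q.1 = p.1 ∧ q.2.1 = p.2.1) ∨ (q.1 = p.2.1 ∧ q.2.1 = p.1)) ∧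
            ∃ hm : q ∈ {r ∈ P.paths | z.1 ∈ r.2.2.support ∧ z.1 ≠ r.1 ∧ z.1 ≠ r.2.1},
              z.2 = (g z.1 ⟨q, hm⟩).succ := by
          intro z hz
          have : ∃ wv ∈ p.2.2.support, φ wv = z := by
            simpa [w0, Walk.support_copy, Walk.support_map] using hz
          obtain ⟨wv, hwv, rfl⟩ := this
          by_cases h1 : wv = p.1
          · subst h1; left; show (p.1, c p.1) = _; rw [hc1]
          · by_cases h2 : wv = p.2.1
            · subst h2; right; left; show (p.2.1, c p.2.1) = _; rw [hc2]
            · right; right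
              have hm : p ∈ {q ∈ P.paths | wv ∈ q.2.2.support ∧ wv ≠ q.1 ∧ wv ≠ q.2.1} :=
                ⟨hp, hwv, h1, h2⟩
              refine ⟨p, hp, Or.inl ⟨rfl, rfl⟩, hm, ?_⟩
              show c wv = _
              rw [hcdef]
              simp only [dif_pos hm]
              rfl
        rcases hend with ⟨e1, e2⟩ | ⟨e1, e2⟩
        · subst e1; subst e2
          exact ⟨w0, hpath0, hlen0, hsupp0⟩
        · subst e1; subst e2
          refine ⟨w0.reverse, hpath0.reverse, by simpa using hlen0, ?_⟩
          intro z hz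
          rw [Walk.support_reverse, List.mem_reverse] at hz
          rcases hsupp0 z hz with h0 | h0 | ⟨q, hq, he, hm, hq2⟩
          · exact Or.inr (Or.inl h0)
          · exact Or.inl h0
          · exact Or.inr (Or.inr ⟨q, hq, by tauto, hm, hq2⟩)
  choose W hW1 hW2 hW3 using key
  refine ⟨fun u v h => W u v h, ?_, ?_⟩
  · intro u v h
    refine ⟨hW1 u v h, hW2 u v h, ?_⟩
    intro z hz hzr
    rcases hW3 u v h z hz with h0 | h0 | ⟨p, _, _, hm, hz2⟩
    · exact Or.inl h0
    · exact Or.inr h0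
    · obtain ⟨a, ha⟩ := hzr
      have hz0 : z.2 = 0 := by rw [← ha]
      exact absurd (hz2.symm.trans hz0) (Fin.succ_ne_zero _)
  · intro u v x y h₁ h₂ hne z hz1 hz2
    have T1 := hW3 u v h₁ z hz1
    have T2 := hW3 x y h₂ z hz2
    have aux : ∀ a b : V, (z = ((a, 0) : V × Fin (d + 1)) ∨ z = (b, 0)) → z.2 = 0 := by
      rintro a b (rfl | rfl) <;> rfl
    rcases T1 with h0 | h0 | ⟨p₁, hp₁, he₁, hm₁, hq₁⟩
    · refine ⟨Or.inl h0, ?_⟩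
      rcases T2 with h0' | h0' | ⟨p₂, _, _, hm₂, hq₂⟩
      · exact Or.inl h0'
      · exact Or.inr h0'
      · exact absurd (hq₂.symm.trans (aux u v (Or.inl h0))) (Fin.succ_ne_zero _)
    · refine ⟨Or.inr h0, ?_⟩
      rcases T2 with h0' | h0' | ⟨p₂, _, _, hm₂, hq₂⟩
      · exact Or.inl h0'
      · exact Or.inr h0'
      · exact absurd (hq₂.symm.trans (aux u v (Or.inr h0))) (Fin.succ_ne_zero _)
    · rcases T2 with h0' | h0' | ⟨p₂, hp₂, he₂, hm₂, hq₂⟩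
      · exact absurd (hq₁.symm.trans (aux x y (Or.inl h0'))) (Fin.succ_ne_zero _)
      · exact absurd (hq₁.symm.trans (aux x y (Or.inr h0'))) (Fin.succ_ne_zero _)
      · exfalso
        apply hne
        have hsucc : (g z.1 ⟨p₁, hm₁⟩).succ = (g z.1 ⟨p₂, hm₂⟩).succ := hq₁.symm.trans hq₂
        have hsub : (⟨p₁, hm₁⟩ : {q // q ∈ _}) = ⟨p₂, hm₂⟩ :=
          hg z.1 (Fin.succ_injective _ hsucc)
        have hpp : p₁ = p₂ := congrArg Subtype.val hsub
        subst hpp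
        rcases he₁ with ⟨e1, e2⟩ | ⟨e1, e2⟩ <;> rcases he₂ with ⟨e3, e4⟩ | ⟨e3, e4⟩ <;>
          subst e1 <;> subst e2 <;> subst e3 <;> subst e4 <;>
          first | rfl | exact Sym2.eq_swap
end

section
/- Let G be a graph, k ≥ 1 an integer, and d = Δ(G^{⌊k/2⌋}). Then the k-th power G^k is a ⌊k/2⌋-shallow minor of G ∘ \overline{K_{d+1}}. -/
open SimpleGraph

variable {V W : Type}

infixl:70 " ⊠ " => strongProd

section Aux

variable {V : Type}

lemma exists_injOn_fin {s : Set V} {n : ℕ} (hs : s.Finite) (h : s.ncard ≤ n + 1) :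
    ∃ f : V → Fin (n + 1), Set.InjOn f s := by
  haveI := hs.fintype
  have hc : Fintype.card s ≤ Fintype.card (Fin (n + 1)) := by
    rw [Fintype.card_fin]
    rwa [Set.ncard_eq_toFinset_card', Set.toFinset_card] at h
  obtain ⟨e⟩ := Function.Embedding.nonempty_of_card_le hc
  classical
  refine ⟨fun v => if hv : v ∈ s then e ⟨v, hv⟩ else 0, ?_⟩
  intro a ha b hb hab
  simp only [dif_pos ha, dif_pos hb] at hab
  exact congrArg Subtype.val (e.injective hab)

lemma split_walk {G : SimpleGraph V} :
    ∀ {v v' : V} (p : G.Walk v v') (a : ℕ), a ≤ p.length →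
      ∃ (x : V) (q₁ : G.Walk v x) (q₂ : G.Walk x v'),
        q₁.length = a ∧ q₂.length = p.length - a := by
  intro v v' p
  induction p with
  | nil =>
    intro a ha
    simp only [SimpleGraph.Walk.length_nil, Nat.le_zero] at ha
    subst ha
    exact ⟨_, .nil, .nil, rfl, rfl⟩
  | @cons u w z h p ih =>
    intro a ha
    cases a with
    | zero => exact ⟨u, .nil, .cons h p, rfl, by simp⟩
    | succ a =>
      obtain ⟨x, q₁, q₂, h₁, h₂⟩ := ih a (by simpa using Nat.succ_le_succ_iff.mp ha)
      exact ⟨x, .cons h q₁, q₂, by simp [h₁], by simp; omega⟩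

lemma walk_induce {A : Type} {L : SimpleGraph A} {s : Set A} :
    ∀ {x y : A} (p : L.Walk x y) (hp : ∀ z ∈ p.support, z ∈ s),
      ∃ q : (L.induce s).Walk ⟨x, hp x p.start_mem_support⟩ ⟨y, hp y p.end_mem_support⟩,
        q.length = p.length := by
  intro x y p
  induction p with
  | nil => intro hp; exact ⟨.nil, rfl⟩
  | @cons u w z h p ih =>
    intro hp
    obtain ⟨q, hq⟩ := ih (fun z hz => hp z (by simp [hz]))
    exact ⟨.cons (by exact h) q, congrArg (· + 1) hq⟩

end Aux

/-- For `d = Δ(G^{⌊k/2⌋})`, the `k`-th power `G^k` is a `⌊k/2⌋`-shallow minor of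
`G ∘ K̄_{d+1}`. -/
theorem power_shallowMinor {V : Type} (G : SimpleGraph V) (k d : ℕ) (hk : 1 ≤ k)
    (hd : MaxDegLE (powG G (k / 2)) d) :
    ShallowMinor (powG G k) (lexProd G (⊥ : SimpleGraph (Fin (d + 1)))) (k / 2) := by
  classical
  set r := k / 2 with hr
  set L := lexProd G (⊥ : SimpleGraph (Fin (d + 1))) with hL
  -- the ball of radius r
  set ball : V → Set V := fun v => {u | ∃ p : G.Walk v u, p.length ≤ r} with hball
  have ball_symm : ∀ {u v : V}, u ∈ ball v → v ∈ ball u := by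
    rintro u v ⟨p, hp⟩; exact ⟨p.reverse, by simpa using hp⟩
  have self_mem_ball : ∀ v, v ∈ ball v := fun v => ⟨.nil, by simp⟩
  -- the balls are small
  have ball_eq : ∀ u, ball u = insert u ((powG G r).neighborSet u) := by
    intro u
    ext w
    constructor
    · rintro ⟨p, hp⟩
      by_cases hw : w = u
      · exact Or.inl hw
      · exact Or.inr ⟨fun h => hw h.symm, p, hp⟩
    · rintro (rfl | ⟨_, p, hp⟩)
      · exact self_mem_ball w
      · exact ⟨p, hp⟩
  have ball_fin : ∀ u, (ball u).Finite := fun u => by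
    rw [ball_eq]; exact ((hd u).1).insert u
  have ball_card : ∀ u, (ball u).ncard ≤ d + 1 := by
    intro u
    rw [ball_eq]
    calc (insert u ((powG G r).neighborSet u)).ncard
        ≤ ((powG G r).neighborSet u).ncard + 1 :=
          Set.ncard_insert_le _ _
      _ ≤ d + 1 := by have := (hd u).2; omega
  -- choose colorings
  have hex : ∀ u, ∃ f : V → Fin (d + 1), Set.InjOn f (ball u) :=
    fun u => exists_injOn_fin (ball_fin u) (ball_card u)
  choose f hf using hex
  -- the model
  set μ : V → Set (V × Fin (d + 1)) :=
    fun v => {p | p.1 ∈ ball v ∧ p.2 = f p.1 v} with hμ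
  have mem_μ : ∀ {v u i}, (u, i) ∈ μ v ↔ u ∈ ball v ∧ i = f u v := fun {v u i} => Iff.rfl
  -- the homomorphism into the lexicographic product
  have φadj : ∀ (v : V) {a b : V}, G.Adj a b → L.Adj (a, f a v) (b, f b v) :=
    fun v {a b} h => Or.inl h
  -- key: walks to the center
  have key : ∀ (v : V) (a : μ v),
      ∃ q : (L.induce (μ v)).Walk ⟨(v, f v v), self_mem_ball v, rfl⟩ a, q.length ≤ r := by
    rintro v ⟨⟨u, i⟩, hu, hi⟩
    obtain rfl : i = f u v := hi
    obtain ⟨p, hp⟩ := hu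
    have hsup : ∀ z ∈ (p.map ⟨fun x => (x, f x v), fun h => φadj v h⟩).support, z ∈ μ v := by
      intro z hz
      rw [SimpleGraph.Walk.support_map, List.mem_map] at hz
      obtain ⟨y, hy, rfl⟩ := hz
      refine ⟨⟨p.takeUntil y hy, le_trans (p.length_takeUntil_le hy) hp⟩, rfl⟩
    obtain ⟨q, hq⟩ := walk_induce (p.map ⟨fun x => (x, f x v), fun h => φadj v h⟩) hsup
    exact ⟨q, by rw [hq]; simpa using hp⟩
  refine ⟨μ, ?_, ?_, ?_, ?_⟩
  · -- connectivity
    intro v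
    haveI : Nonempty (μ v) := ⟨⟨(v, f v v), self_mem_ball v, rfl⟩⟩
    refine SimpleGraph.Connected.mk fun a b => ?_
    obtain ⟨qa, _⟩ := key v a
    obtain ⟨qb, _⟩ := key v b
    exact qa.reverse.reachable.trans qb.reachable
  · -- radius
    intro v
    refine ⟨⟨(v, f v v), self_mem_ball v, rfl⟩, fun a => ?_⟩
    obtain ⟨q, hq⟩ := key v a
    exact le_trans (SimpleGraph.dist_le q) hq
  · -- disjointness
    intro v v' hne
    rw [Set.disjoint_left]
    rintro ⟨u, i⟩ ⟨hu, hi⟩ ⟨hu', hi'⟩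
    exact hne (hf u (ball_symm hu) (ball_symm hu') (hi ▸ hi'))
  · -- adjacency
    rintro v v' ⟨hvv', p, hp⟩
    have hℓ : 1 ≤ p.length := by
      rcases Nat.eq_zero_or_pos p.length with h0 | h1
      · exact absurd (p.eq_of_length_eq_zero h0) hvv'
      · exact h1
    obtain ⟨x, q₁, q₂, h₁, h₂⟩ := split_walk p ((p.length - 1) / 2) (by omega)
    have hq₂ : 1 ≤ q₂.length := by omega
    cases q₂ with
    | nil => simp at hq₂
    | @cons _ y _ hxy q₂' =>
      have hx : x ∈ ball v := ⟨q₁, by omega⟩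
      have hy : y ∈ ball v' := by
        refine ball_symm ⟨q₂', ?_⟩
        have := h₂
        simp only [SimpleGraph.Walk.length_cons] at this
        omega
      exact ⟨(x, f x v), ⟨hx, rfl⟩, (y, f y v'), ⟨hy, rfl⟩, Or.inl hxy⟩
end
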